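/- Let p be a prime and s₁, s₂ real numbers with s₁ > 2 and s₂ > 2. Set X = p^{−s₁} and Y = p^{−s₂}. Then (1 − p⁻¹)⁻² times the integral over {(x,y,z) ∈ ℤ_p³ : ‖y‖ < ‖z‖ ≤ ‖x‖} of ‖x‖^{s₂−2}·‖z‖^{s₁−1} with respect to μ³ equals p⁻¹ / ((1 − XY)(1 − p⁻¹X)). -/

import Mathlib

open MeasureTheory
open scoped ENNReal

section Aux

variable {p : ℕ} [Fact p.Prime] [MeasurableSpace ℤ_[p]] [BorelSpace ℤ_[p]]
  (μ : Measure ℤ_[p]) [μ.IsAddHaarMeasure]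

omit [MeasurableSpace ℤ_[p]] [BorelSpace ℤ_[p]] in
lemma padic_ball_closed (n : ℕ) : IsClosed {x : ℤ_[p] | ‖x‖ ≤ (p:ℝ) ^ (-n : ℤ)} :=
  isClosed_le (by continuity) continuous_const

lemma padic_ball_meas (hμ : μ Set.univ = 1) (n : ℕ) :
    μ {x : ℤ_[p] | ‖x‖ ≤ (p:ℝ) ^ (-n : ℤ)} = ((p : ℝ≥0∞) ^ n)⁻¹ := by
  have hp := (Fact.out : p.Prime)
  set B : Set ℤ_[p] := {x : ℤ_[p] | ‖x‖ ≤ (p:ℝ) ^ (-n : ℤ)} with hB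
  have hBm : MeasurableSet B := (padic_ball_closed n).measurableSet
  set C : ℕ → Set ℤ_[p] := fun k => (fun x => (-(k : ℤ_[p])) + x) ⁻¹' B with hC
  have hCm : ∀ k, MeasurableSet (C k) := fun k =>
    hBm.preimage (measurable_const_add _)
  have hCmeas : ∀ k, μ (C k) = μ B := fun k => measure_preimage_add μ _ B
  have hmem : ∀ k : ℕ, ∀ x : ℤ_[p], x ∈ C k ↔ ‖x - (k : ℤ_[p])‖ ≤ (p:ℝ) ^ (-n : ℤ) := by
    intro k x
    simp only [hC, Set.mem_preimage, hB, Set.mem_setOf_eq, neg_add_eq_sub]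
  have hcover : Set.univ = ⋃ k ∈ Finset.range (p ^ n), C k := by
    ext x
    simp only [Set.mem_univ, true_iff, Set.mem_iUnion, Finset.mem_range]
    refine ⟨x.appr n, x.appr_lt n, ?_⟩
    rw [hmem]
    exact (PadicInt.norm_le_pow_iff_mem_span_pow _ n).mpr (x.appr_spec n)
  have hdisj : (↑(Finset.range (p ^ n)) : Set ℕ).PairwiseDisjoint C := by
    intro k hk l hl hkl
    refine Set.disjoint_left.mpr fun x hxk hxl => hkl ?_
    rw [hmem] at hxk hxl
    have h3 : ‖(((k : ℤ) - (l : ℤ) : ℤ) : ℤ_[p])‖ ≤ (p:ℝ) ^ (-n : ℤ) := by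
      have : (((k : ℤ) - (l : ℤ) : ℤ) : ℤ_[p]) = (x - (l : ℤ_[p])) - (x - (k : ℤ_[p])) := by
        push_cast; ring
      rw [this, sub_eq_add_neg]
      refine le_trans (PadicInt.nonarchimedean _ _) (max_le hxl ?_)
      rwa [norm_neg]
    rw [PadicInt.norm_int_le_pow_iff_dvd] at h3
    have hne : (k : ℤ) - (l : ℤ) ≠ 0 := by
      intro h; exact hkl (by exact_mod_cast sub_eq_zero.mp h)
    have hle := Int.le_of_dvd (abs_pos.mpr hne) ((dvd_abs _ _).mpr h3)
    push_cast at hle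
    simp only [Finset.coe_range, Set.mem_Iio] at hk hl
    have hk' : (k : ℤ) < (p : ℤ) ^ n := by exact_mod_cast hk
    have hl' : (l : ℤ) < (p : ℤ) ^ n := by exact_mod_cast hl
    have hk0 : (0 : ℤ) ≤ (k : ℤ) := Int.natCast_nonneg k
    have hl0 : (0 : ℤ) ≤ (l : ℤ) := Int.natCast_nonneg l
    have hlt : |(k : ℤ) - (l : ℤ)| < (p : ℤ) ^ n :=
      abs_sub_lt_iff.mpr ⟨by linarith, by linarith⟩
    linarith
  have key : (1 : ℝ≥0∞) = (p ^ n : ℕ) * μ B := by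
    rw [← hμ, hcover, measure_biUnion_finset hdisj fun k _ => hCm k]
    simp [hCmeas, Finset.sum_const]
  have hpn0 : ((p ^ n : ℕ) : ℝ≥0∞) ≠ 0 := by
    simp [pow_ne_zero, hp.ne_zero]
  have hpnt : ((p ^ n : ℕ) : ℝ≥0∞) ≠ ⊤ := by simp
  have : μ B = ((p ^ n : ℕ) : ℝ≥0∞)⁻¹ := by
    calc μ B = ((p ^ n : ℕ) : ℝ≥0∞)⁻¹ * (((p ^ n : ℕ) : ℝ≥0∞) * μ B) := by
          rw [← mul_assoc, ENNReal.inv_mul_cancel hpn0 hpnt, one_mul]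
      _ = ((p ^ n : ℕ) : ℝ≥0∞)⁻¹ := by rw [← key, mul_one]
  rw [this]; push_cast; ring_nf

end Aux

lemma calc_term (P : ℝ) (hP : 1 < P) (s₁ s₂ : ℝ) (a j : ℕ) :
    (((P^a)⁻¹ - (P^(a+1))⁻¹) * ((P^(a+j+1))⁻¹ * ((P^(a+j))⁻¹ - (P^(a+j+1))⁻¹))) *
      ((P^(-(a:ℤ)))^(s₂-2) * (P^(-((a+j : ℕ) : ℤ)))^(s₁-1))
    = (1-P⁻¹)^2 * P⁻¹ * ((P ^ (-(s₁+s₂)))^a * (P ^ (-(s₁+1)))^j) := by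
  have hP0 : (0:ℝ) < P := lt_trans one_pos hP
  have h1 : ∀ n : ℕ, (P^n)⁻¹ = P ^ (-(n:ℝ)) := fun n => by
    rw [← Real.rpow_natCast P n, ← Real.rpow_neg hP0.le]
  have h2 : ∀ n : ℕ, P^(-(n:ℤ)) = P ^ (-(n:ℝ)) := fun n => by
    rw [← Real.rpow_intCast P (-(n:ℤ))]; norm_num
  have hadd : ∀ u v : ℝ, P ^ u * P ^ v = P ^ (u+v) := fun u v => (Real.rpow_add hP0 u v).symm
  have hd : ∀ x : ℝ, P ^ (-x) - P ^ (-(x+1)) = P ^ (-x) * (1 - P⁻¹) := fun x => by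
    rw [neg_add, Real.rpow_add hP0, Real.rpow_neg_one]; ring
  have hPinv : P⁻¹ = P^(-1:ℝ) := (Real.rpow_neg_one P).symm
  rw [h1 a, h1 (a+1), h1 (a+j+1), h1 (a+j), h2 a, h2 (a+j)]
  push_cast
  rw [← Real.rpow_natCast (P ^ (-(s₁+s₂))) a, ← Real.rpow_natCast (P ^ (-(s₁+1))) j,
    ← Real.rpow_mul hP0.le, ← Real.rpow_mul hP0.le, ← Real.rpow_mul hP0.le,
    ← Real.rpow_mul hP0.le, hd, hd]
  calc (P ^ (-(a:ℝ)) * (1 - P⁻¹) * (P ^ (-((a:ℝ)+j+1)) * (P ^ (-((a:ℝ)+j)) * (1 - P⁻¹)))) *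
        (P ^ (-(a:ℝ)*(s₂-2)) * P ^ (-((a:ℝ)+j)*(s₁-1)))
      = (1-P⁻¹)^2 * (P ^ (-(a:ℝ)) * (P ^ (-((a:ℝ)+j+1)) * (P ^ (-((a:ℝ)+j)) *
          (P ^ (-(a:ℝ)*(s₂-2)) * P ^ (-((a:ℝ)+j)*(s₁-1)))))) := by ring
    _ = (1-P⁻¹)^2 * P ^ (-(a:ℝ) + (-((a:ℝ)+j+1) + (-((a:ℝ)+j) +
          (-(a:ℝ)*(s₂-2) + -((a:ℝ)+j)*(s₁-1))))) := by rw [hadd, hadd, hadd, hadd]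
    _ = (1-P⁻¹)^2 * P⁻¹ * (P ^ (-(s₁+s₂)*(a:ℝ)) * P ^ (-(s₁+1)*(j:ℝ))) := by
        rw [hadd, hPinv, mul_assoc, hadd]
        congr 1
        ring

set_option maxHeartbeats 1000000 in
theorem stmt5 (p : ℕ) [Fact p.Prime]
    [MeasurableSpace ℤ_[p]] [BorelSpace ℤ_[p]]
    (μ : Measure ℤ_[p]) [μ.IsAddHaarMeasure] (hμ : μ Set.univ = 1)
    (s₁ s₂ : ℝ) (hs₁ : 2 < s₁) (hs₂ : 2 < s₂)
    (X Y : ℝ) (hX : X = (p : ℝ) ^ (-s₁)) (hY : Y = (p : ℝ) ^ (-s₂)) :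
    ((1 - (p : ℝ)⁻¹) ^ 2)⁻¹ *
      ∫ w in {w : ℤ_[p] × ℤ_[p] × ℤ_[p] | ‖w.2.1‖ < ‖w.2.2‖ ∧ ‖w.2.2‖ ≤ ‖w.1‖},
        ‖w.1‖ ^ (s₂ - 2) * ‖w.2.2‖ ^ (s₁ - 1) ∂(μ.prod (μ.prod μ)) =
      (p : ℝ)⁻¹ / ((1 - X * Y) * (1 - (p : ℝ)⁻¹ * X)) := by
  have hp := (Fact.out : p.Prime)
  have hP1 : (1:ℝ) < (p:ℝ) := by exact_mod_cast hp.one_lt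
  have hP0 : (0:ℝ) < (p:ℝ) := lt_trans one_pos hP1
  haveI : IsProbabilityMeasure μ := ⟨hμ⟩
  set ν := μ.prod (μ.prod μ) with hν
  set Sx : ℕ → Set ℤ_[p] := fun n => {x : ℤ_[p] | ‖x‖ = (p:ℝ) ^ (-(n:ℤ))} with hSx
  set Bl : ℕ → Set ℤ_[p] := fun n => {x : ℤ_[p] | ‖x‖ ≤ (p:ℝ) ^ (-(n:ℤ))} with hBl
  have hBlm : ∀ n, MeasurableSet (Bl n) := fun n => (padic_ball_closed n).measurableSet
  have hSxm : ∀ n, MeasurableSet (Sx n) := fun n =>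
    (isClosed_eq (by continuity) continuous_const).measurableSet
  -- ball membership reformulation
  have hblt : ∀ (n : ℕ) (x : ℤ_[p]), x ∈ Bl (n+1) ↔ ‖x‖ < (p:ℝ) ^ (-(n:ℤ)) := by
    intro n x
    have h : (-(((n:ℕ)+1 : ℕ) : ℤ)) = -(n:ℤ) - 1 := by push_cast; ring
    rw [hBl]
    simp only [Set.mem_setOf_eq]
    rw [h, ← PadicInt.norm_lt_pow_iff_norm_le_pow_sub_one]
  -- sphere measure
  have hSeq : ∀ n, Sx n = Bl n \ Bl (n+1) := by
    intro n
    ext x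
    simp only [hSx, Set.mem_setOf_eq, Set.mem_diff, hblt n x]
    constructor
    · intro h; exact ⟨le_of_eq h, by rw [h]; exact lt_irrefl _⟩
    · intro ⟨h1, h2⟩; exact le_antisymm h1 (not_lt.mp h2)
  have hsub : ∀ n, Bl (n+1) ⊆ Bl n := by
    intro n x hx
    simp only [hBl, Set.mem_setOf_eq] at hx ⊢
    refine le_trans hx ((zpow_le_zpow_iff_right₀ hP1).mpr ?_)
    push_cast; omega
  have hμS : ∀ n, μ (Sx n) = ((p : ℝ≥0∞) ^ n)⁻¹ - ((p : ℝ≥0∞) ^ (n+1))⁻¹ := by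
    intro n
    rw [hSeq n, measure_diff (hsub n) (hBlm (n+1)).nullMeasurableSet (measure_ne_top μ _),
      padic_ball_meas μ hμ n, padic_ball_meas μ hμ (n+1)]
  have hpE0 : ∀ n : ℕ, ((p : ℝ≥0∞) ^ n) ≠ 0 := fun n => by
    simp [pow_ne_zero, hp.ne_zero]
  have hBt : ∀ n, (μ (Bl n)).toReal = (((p:ℝ))^n)⁻¹ := by
    intro n
    rw [hBl, padic_ball_meas μ hμ n, ENNReal.toReal_inv]
    norm_num
  have hSt : ∀ n, (μ (Sx n)).toReal = (((p:ℝ))^n)⁻¹ - (((p:ℝ))^(n+1))⁻¹ := by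
    intro n
    rw [hμS n, ENNReal.toReal_sub_of_le]
    · rw [ENNReal.toReal_inv, ENNReal.toReal_inv]; norm_num
    · refine ENNReal.inv_le_inv' (pow_le_pow_right₀ ?_ (by omega))
      exact_mod_cast hp.one_le
    · exact ENNReal.inv_ne_top.mpr (hpE0 n)
  -- the pieces
  set T : ℕ × ℕ → Set (ℤ_[p] × ℤ_[p] × ℤ_[p]) :=
    fun q => (Sx q.1) ×ˢ ((Bl (q.1+q.2+1)) ×ˢ (Sx (q.1+q.2))) with hT
  have hTm : ∀ q, MeasurableSet (T q) := fun q =>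
    (hSxm _).prod ((hBlm _).prod (hSxm _))
  have hmemT : ∀ (a j : ℕ) (w : ℤ_[p] × ℤ_[p] × ℤ_[p]), w ∈ T (a, j) ↔
      ‖w.1‖ = (p:ℝ) ^ (-(a:ℤ)) ∧ ‖w.2.1‖ ≤ (p:ℝ) ^ (-((a+j+1 : ℕ):ℤ)) ∧
        ‖w.2.2‖ = (p:ℝ) ^ (-((a+j : ℕ):ℤ)) := by
    intro a j w
    simp only [hT, hSx, hBl, Set.mem_prod, Set.mem_setOf_eq]
  -- valuation facts
  have hval : ∀ x : ℤ_[p], x ≠ 0 → ‖x‖ = (p:ℝ) ^ (-(x.valuation : ℤ)) := by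
    intro x hx
    exact PadicInt.norm_eq_zpow_neg_valuation hx
  -- decomposition of the region
  have hunion : {w : ℤ_[p] × ℤ_[p] × ℤ_[p] | ‖w.2.1‖ < ‖w.2.2‖ ∧ ‖w.2.2‖ ≤ ‖w.1‖} =
      ⋃ q : ℕ × ℕ, T q := by
    ext w
    simp only [Set.mem_setOf_eq, Set.mem_iUnion]
    constructor
    · rintro ⟨h1, h2⟩
      have hz : w.2.2 ≠ 0 := by
        intro h; rw [h, norm_zero] at h1; exact (norm_nonneg _).not_gt h1
      have hx0 : w.1 ≠ 0 := by
        intro h; rw [h, norm_zero] at h2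
        exact (norm_nonneg _).not_gt (lt_of_lt_of_le h1 h2)
      set a := w.1.valuation
      set c := w.2.2.valuation
      have hax := hval w.1 hx0
      have hcz := hval w.2.2 hz
      have hac : a ≤ c := by
        rw [hax, hcz] at h2
        have := (zpow_le_zpow_iff_right₀ hP1).mp h2
        omega
      refine ⟨(a, c - a), ?_⟩
      rw [hmemT]
      have hsum : a + (c - a) = c := by omega
      rw [hsum]
      refine ⟨hax, ?_, hcz⟩
      have h1' : ‖w.2.1‖ < (p:ℝ) ^ (-(c:ℤ)) := by rw [← hcz]; exact h1
      rw [PadicInt.norm_lt_pow_iff_norm_le_pow_sub_one] at h1'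
      have : (-((c+1 : ℕ):ℤ)) = -(c:ℤ) - 1 := by push_cast; ring
      rw [this]
      exact h1'
    · rintro ⟨⟨a, j⟩, hw⟩
      rw [hmemT] at hw
      obtain ⟨hx, hy, hz⟩ := hw
      constructor
      · calc ‖w.2.1‖ ≤ (p:ℝ) ^ (-((a+j+1 : ℕ):ℤ)) := hy
          _ < (p:ℝ) ^ (-((a+j : ℕ):ℤ)) := by
              refine zpow_lt_zpow_right₀ hP1 ?_
              push_cast; omega
          _ = ‖w.2.2‖ := hz.symm
      · rw [hx, hz]
        refine (zpow_le_zpow_iff_right₀ hP1).mpr ?_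
        push_cast; omega
  -- pairwise disjoint
  have hinj : ∀ m n : ℕ, (p:ℝ) ^ (-(m:ℤ)) = (p:ℝ) ^ (-(n:ℤ)) → m = n := by
    intro m n h
    have := zpow_right_injective₀ hP0 (ne_of_gt hP1) h
    omega
  have hdisj : Pairwise (Function.onFun Disjoint T) := by
    intro q q' hne
    refine Set.disjoint_left.mpr fun w hw hw' => hne ?_
    rcases q with ⟨a, j⟩; rcases q' with ⟨a', j'⟩
    rw [hmemT] at hw hw'
    have ha : a = a' := hinj _ _ (hw.1.symm.trans hw'.1)
    have hc : a + j = a' + j' := hinj _ _ (hw.2.2.symm.trans hw'.2.2)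
    simp only [Prod.mk.injEq]
    omega
  -- integrability
  set f : ℤ_[p] × ℤ_[p] × ℤ_[p] → ℝ := fun w => ‖w.1‖ ^ (s₂ - 2) * ‖w.2.2‖ ^ (s₁ - 1) with hf
  have hcont : Continuous f := by
    apply Continuous.mul
    · exact (continuous_norm.comp continuous_fst).rpow_const fun x => Or.inr (by linarith)
    · exact (continuous_norm.comp (continuous_snd.comp continuous_snd)).rpow_const
        fun x => Or.inr (by linarith)
  have hIf : Integrable f ν := by
    refine (integrable_const (1:ℝ)).mono' hcont.aestronglyMeasurable (ae_of_all _ fun w => ?_)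
    have h1 : (0:ℝ) ≤ ‖w.1‖ ^ (s₂ - 2) := Real.rpow_nonneg (norm_nonneg _) _
    have h2 : (0:ℝ) ≤ ‖w.2.2‖ ^ (s₁ - 1) := Real.rpow_nonneg (norm_nonneg _) _
    rw [Real.norm_eq_abs, abs_of_nonneg (mul_nonneg h1 h2)]
    refine mul_le_one₀ ?_ h2 ?_
    · exact Real.rpow_le_one (norm_nonneg _) (PadicInt.norm_le_one _) (by linarith)
    · exact Real.rpow_le_one (norm_nonneg _) (PadicInt.norm_le_one _) (by linarith)
  -- per-piece integral
  have hterm : ∀ q : ℕ × ℕ, (∫ w in T q, f w ∂ν) =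
      (1-(p:ℝ)⁻¹)^2 * (p:ℝ)⁻¹ *
        (((p:ℝ) ^ (-(s₁+s₂)))^q.1 * ((p:ℝ) ^ (-(s₁+1)))^q.2) := by
    rintro ⟨a, j⟩
    have hc : Set.EqOn f (fun _ => ((p:ℝ)^(-(a:ℤ)))^(s₂-2) * ((p:ℝ)^(-((a+j : ℕ) : ℤ)))^(s₁-1))
        (T (a, j)) := by
      intro w hw
      rw [hmemT] at hw
      simp only [hf]
      rw [hw.1, hw.2.2]
    rw [setIntegral_congr_fun (hTm _) hc, setIntegral_const, smul_eq_mul]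
    have hmeasT : ν (T (a,j)) = μ (Sx a) * (μ (Bl (a+j+1)) * μ (Sx (a+j))) := by
      rw [hν, hT]
      rw [Measure.prod_prod, Measure.prod_prod]
    rw [measureReal_def, hmeasT, ENNReal.toReal_mul, ENNReal.toReal_mul, hSt, hBt, hSt]
    exact calc_term (p:ℝ) hP1 s₁ s₂ a j
  -- summing up
  rw [hunion, integral_iUnion hTm hdisj hIf.integrableOn]
  have hA0 : (0:ℝ) ≤ (p:ℝ) ^ (-(s₁+s₂)) := (Real.rpow_pos_of_pos hP0 _).le
  have hA1 : (p:ℝ) ^ (-(s₁+s₂)) < 1 :=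
    Real.rpow_lt_one_of_one_lt_of_neg hP1 (by linarith)
  have hB0 : (0:ℝ) ≤ (p:ℝ) ^ (-(s₁+1)) := (Real.rpow_pos_of_pos hP0 _).le
  have hB1 : (p:ℝ) ^ (-(s₁+1)) < 1 :=
    Real.rpow_lt_one_of_one_lt_of_neg hP1 (by linarith)
  have hsumA : Summable fun a : ℕ => ‖((p:ℝ) ^ (-(s₁+s₂)))^a‖ := by
    simp only [norm_pow, Real.norm_eq_abs, abs_of_nonneg hA0]
    exact summable_geometric_of_lt_one hA0 hA1
  have hsumB : Summable fun j : ℕ => ‖((p:ℝ) ^ (-(s₁+1)))^j‖ := by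
    simp only [norm_pow, Real.norm_eq_abs, abs_of_nonneg hB0]
    exact summable_geometric_of_lt_one hB0 hB1
  have := tsum_mul_tsum_of_summable_norm hsumA hsumB
  calc ((1 - (p:ℝ)⁻¹) ^ 2)⁻¹ * ∑' q : ℕ × ℕ, ∫ w in T q, f w ∂ν
      = ((1 - (p:ℝ)⁻¹) ^ 2)⁻¹ * ∑' q : ℕ × ℕ, (1-(p:ℝ)⁻¹)^2 * (p:ℝ)⁻¹ *
          (((p:ℝ) ^ (-(s₁+s₂)))^q.1 * ((p:ℝ) ^ (-(s₁+1)))^q.2) := by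
        rw [tsum_congr hterm]
    _ = ((1 - (p:ℝ)⁻¹) ^ 2)⁻¹ * ((1-(p:ℝ)⁻¹)^2 * (p:ℝ)⁻¹ *
          ((∑' a : ℕ, ((p:ℝ) ^ (-(s₁+s₂)))^a) * (∑' j : ℕ, ((p:ℝ) ^ (-(s₁+1)))^j))) := by
        rw [tsum_mul_left, this]
    _ = (p : ℝ)⁻¹ / ((1 - X * Y) * (1 - (p : ℝ)⁻¹ * X)) := by
        rw [tsum_geometric_of_lt_one hA0 hA1, tsum_geometric_of_lt_one hB0 hB1]
        have hXY : X * Y = (p:ℝ) ^ (-(s₁+s₂)) := by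
          rw [hX, hY, ← Real.rpow_add hP0, neg_add]
        have hPX : (p:ℝ)⁻¹ * X = (p:ℝ) ^ (-(s₁+1)) := by
          rw [hX, ← Real.rpow_neg_one, ← Real.rpow_add hP0]
          ring_nf
        rw [hXY, hPX]
        have hne1 : (1 - (p:ℝ)⁻¹) ≠ 0 := by
          have : (p:ℝ)⁻¹ < 1 := by
            rw [inv_lt_one_iff₀]; right; exact hP1
          linarith
        calc ((1 - (p:ℝ)⁻¹) ^ 2)⁻¹ * ((1-(p:ℝ)⁻¹)^2 * (p:ℝ)⁻¹ *
              ((1 - (p:ℝ) ^ (-(s₁+s₂)))⁻¹ * (1 - (p:ℝ) ^ (-(s₁+1)))⁻¹))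
            = (((1 - (p:ℝ)⁻¹) ^ 2)⁻¹ * (1-(p:ℝ)⁻¹)^2) *
              ((p:ℝ)⁻¹ * ((1 - (p:ℝ) ^ (-(s₁+s₂)))⁻¹ * (1 - (p:ℝ) ^ (-(s₁+1)))⁻¹)) := by ring
          _ = (p:ℝ)⁻¹ * ((1 - (p:ℝ) ^ (-(s₁+s₂)))⁻¹ * (1 - (p:ℝ) ^ (-(s₁+1)))⁻¹) := by
              rw [inv_mul_cancel₀ (pow_ne_zero 2 hne1), one_mul]
          _ = (p:ℝ)⁻¹ / ((1 - (p:ℝ) ^ (-(s₁+s₂))) * (1 - (p:ℝ) ^ (-(s₁+1)))) := by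
              rw [div_eq_mul_inv, mul_inv]
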